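/- Let X ⊆ ℝ^N be a convex set, g : ℝ^N → ℝ^M, and G : ℝ^N → Matrix (Fin M) (Fin N) ℝ such that for every y ∈ X, g has Jacobian G(y) within X at y. Assume constants 0 < σ_min ≤ σ_max < ∞ and ω > 0 such that for all y, y' ∈ X: σ_min‖v‖ ≤ ‖G(y)·v‖ for all v, ‖G(y)‖ ≤ σ_max, and ‖G(y) − G(y')‖ ≤ ω‖y − y'‖. Let x⋆ ∈ X satisfy G(x⋆)ᵀ·g(x⋆) = 0, set ε_min = ‖g(x⋆)‖, let α ∈ (0,1], and define d(x) = (G(x)ᵀG(x))⁻¹·G(x)ᵀ·g(x) for x ∈ X. Let P : ℝ^N → ℝ^N be a nonexpansive map (‖P(u) − P(v)‖ ≤ ‖u − v‖ for all u, v) with P(x⋆) = x⋆. Then for every x ∈ X and every vector d̃ ∈ ℝ^N: ‖P(x − α·d̃) − x⋆‖ ≤ T₁·‖x − x⋆‖² + T₂·‖x − x⋆‖ + α·‖d̃ − d(x)‖, where T₁ = α·ω/(2σ_min) and T₂ = (1−α)·σ_max/σ_min + √2·α·ω·ε_min/σ_min². -/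

import Mathlib

open Matrix

/-- Operator (spectral) 2-norm of a real matrix. -/
noncomputable def matOpNorm {m n : ℕ} (A : Matrix (Fin m) (Fin n) ℝ) : ℝ :=
  ‖LinearMap.toContinuousLinearMap (Matrix.toEuclideanLin A)‖

/-- Matrix-vector product as a map between Euclidean spaces. -/
noncomputable def matVec {m n : ℕ} (A : Matrix (Fin m) (Fin n) ℝ)
    (v : EuclideanSpace ℝ (Fin n)) : EuclideanSpace ℝ (Fin m) :=
  Matrix.toEuclideanLin A v

open scoped RealInnerProductSpace

lemma matVec_apply {m n : ℕ} (A : Matrix (Fin m) (Fin n) ℝ) (v : EuclideanSpace ℝ (Fin n))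
    (i : Fin m) : matVec A v i = ∑ j, A i j * v j := rfl

lemma inner_matVec_transpose {m n : ℕ} (A : Matrix (Fin m) (Fin n) ℝ)
    (u : EuclideanSpace ℝ (Fin m)) (w : EuclideanSpace ℝ (Fin n)) :
    ⟪matVec Aᵀ u, w⟫ = ⟪u, matVec A w⟫ := by
  simp only [PiLp.inner_apply, RCLike.inner_apply, conj_trivial, matVec_apply,
    Matrix.transpose_apply]
  simp only [Finset.sum_mul, Finset.mul_sum]
  rw [Finset.sum_comm]
  congr 1; ext i; congr 1; ext j; ring

lemma matVec_mulmat {m n k : ℕ} (A : Matrix (Fin m) (Fin n) ℝ) (B : Matrix (Fin n) (Fin k) ℝ)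
    (v : EuclideanSpace ℝ (Fin k)) : matVec (A * B) v = matVec A (matVec B v) := by
  ext i
  simp only [matVec_apply, Matrix.mul_apply, Finset.sum_mul, Finset.mul_sum]
  rw [Finset.sum_comm]
  congr 1; ext j; congr 1; ext l; ring

lemma matVec_one {n : ℕ} (v : EuclideanSpace ℝ (Fin n)) : matVec (1 : Matrix (Fin n) (Fin n) ℝ) v = v := by
  ext i; simp [matVec_apply, Matrix.one_apply]

lemma matVec_sub_mat {m n : ℕ} (A B : Matrix (Fin m) (Fin n) ℝ) (v : EuclideanSpace ℝ (Fin n)) :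
    matVec (A - B) v = matVec A v - matVec B v := by
  ext i; simp [matVec_apply, Matrix.sub_apply, sub_mul, Finset.sum_sub_distrib]

lemma norm_matVec_le {m n : ℕ} (A : Matrix (Fin m) (Fin n) ℝ) (v : EuclideanSpace ℝ (Fin n)) :
    ‖matVec A v‖ ≤ matOpNorm A * ‖v‖ := by
  exact (LinearMap.toContinuousLinearMap (Matrix.toEuclideanLin A)).le_opNorm v

lemma matOpNorm_nonneg {m n : ℕ} (A : Matrix (Fin m) (Fin n) ℝ) : 0 ≤ matOpNorm A :=
  norm_nonneg _

lemma norm_matVec_transpose_le {m n : ℕ} (A : Matrix (Fin m) (Fin n) ℝ)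
    (v : EuclideanSpace ℝ (Fin m)) : ‖matVec Aᵀ v‖ ≤ matOpNorm A * ‖v‖ := by
  by_cases h : matVec Aᵀ v = 0
  · rw [h, norm_zero]; exact mul_nonneg (matOpNorm_nonneg A) (norm_nonneg v)
  · have h1 : ‖matVec Aᵀ v‖ ^ 2 = ⟪v, matVec A (matVec Aᵀ v)⟫ := by
      rw [← real_inner_self_eq_norm_sq, inner_matVec_transpose]
    have h2 : ⟪v, matVec A (matVec Aᵀ v)⟫ ≤ ‖v‖ * (matOpNorm A * ‖matVec Aᵀ v‖) :=
      (real_inner_le_norm _ _).trans (by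
        have := norm_matVec_le A (matVec Aᵀ v)
        nlinarith [norm_nonneg v])
    have h3 : 0 < ‖matVec Aᵀ v‖ := norm_pos_iff.mpr h
    nlinarith

section pinv
variable {m n : ℕ} {A : Matrix (Fin m) (Fin n) ℝ} {σ : ℝ}

lemma gram_inv_mul (hσ : 0 < σ)
    (h : ∀ v : EuclideanSpace ℝ (Fin n), σ * ‖v‖ ≤ ‖matVec A v‖) :
    (Aᵀ * A)⁻¹ * (Aᵀ * A) = 1 ∧ (Aᵀ * A) * (Aᵀ * A)⁻¹ = 1 := by
  have hker : ∀ v : EuclideanSpace ℝ (Fin n), matVec (Aᵀ * A) v = 0 → v = 0 := by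
    intro v hv
    have h1 : ⟪v, matVec (Aᵀ * A) v⟫ = 0 := by rw [hv]; simp
    rw [matVec_mulmat, real_inner_comm, inner_matVec_transpose,
      real_inner_self_eq_norm_sq] at h1
    have h2 := h v
    rw [pow_eq_zero_iff (two_ne_zero)] at h1
    rw [h1] at h2
    have : ‖v‖ ≤ 0 := by nlinarith
    simpa [norm_le_zero_iff] using this
  have hinj : Function.Injective ((Aᵀ * A).mulVec) := by
    intro v w hvw
    have h0 : (Aᵀ * A) *ᵥ (v - w) = 0 := by rw [Matrix.mulVec_sub, hvw, sub_self]
    have h1 : matVec (Aᵀ * A) ((WithLp.equiv 2 (Fin n → ℝ)).symm (v - w)) = 0 := by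
      rw [matVec, Matrix.toEuclideanLin_apply]
      change WithLp.toLp 2 ((Aᵀ * A) *ᵥ (v - w)) = 0
      rw [h0]; rfl
    have h2 := hker _ h1
    have h3 : v - w = 0 := congrArg (WithLp.equiv 2 (Fin n → ℝ)) h2
    exact sub_eq_zero.mp h3
  have hu : IsUnit (Aᵀ * A).det :=
    (Matrix.isUnit_iff_isUnit_det _).mp (Matrix.mulVec_injective_iff_isUnit.mp hinj)
  exact ⟨Matrix.nonsing_inv_mul _ hu, Matrix.mul_nonsing_inv _ hu⟩

lemma pinv_norm_le (hσ : 0 < σ)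
    (h : ∀ v : EuclideanSpace ℝ (Fin n), σ * ‖v‖ ≤ ‖matVec A v‖)
    (w : EuclideanSpace ℝ (Fin m)) :
    ‖matVec ((Aᵀ * A)⁻¹ * Aᵀ) w‖ ≤ ‖w‖ / σ := by
  set u := matVec ((Aᵀ * A)⁻¹ * Aᵀ) w with hu
  have hmat : Aᵀ * A * ((Aᵀ * A)⁻¹ * Aᵀ) = Aᵀ := by
    rw [← Matrix.mul_assoc, (gram_inv_mul hσ h).2, Matrix.one_mul]
  have hAAu : matVec (Aᵀ * A) u = matVec Aᵀ w := by
    rw [hu, ← matVec_mulmat, hmat]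
  have key : ‖matVec A u‖ ^ 2 = ⟪w, matVec A u⟫ := by
    rw [← real_inner_self_eq_norm_sq, ← inner_matVec_transpose A (matVec A u) u,
      ← matVec_mulmat, hAAu, inner_matVec_transpose]
  have hAuw : ‖matVec A u‖ ≤ ‖w‖ := by
    by_cases h0 : matVec A u = 0
    · rw [h0, norm_zero]; exact norm_nonneg w
    · have := (real_inner_le_norm w (matVec A u))
      have hp : 0 < ‖matVec A u‖ := norm_pos_iff.mpr h0
      nlinarith
  have := (h u).trans hAuw
  rw [le_div_iff₀ hσ]
  linarith [this]

lemma graminv_norm_le (hσ : 0 < σ)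
    (h : ∀ v : EuclideanSpace ℝ (Fin n), σ * ‖v‖ ≤ ‖matVec A v‖)
    (z : EuclideanSpace ℝ (Fin n)) :
    ‖matVec (Aᵀ * A)⁻¹ z‖ ≤ ‖z‖ / σ ^ 2 := by
  set u := matVec (Aᵀ * A)⁻¹ z with hu
  have hAAu : matVec (Aᵀ * A) u = z := by
    rw [hu, ← matVec_mulmat, (gram_inv_mul hσ h).2, matVec_one]
  have key : ‖matVec A u‖ ^ 2 = ⟪z, u⟫ := by
    rw [← real_inner_self_eq_norm_sq, ← inner_matVec_transpose A (matVec A u) u,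
      ← matVec_mulmat, hAAu]
  have h1 : σ ^ 2 * ‖u‖ ^ 2 ≤ ⟪z, u⟫ := by
    have := h u
    nlinarith [norm_nonneg u, norm_nonneg (matVec A u), key, mul_nonneg hσ.le (norm_nonneg u)]
  have h2 : ⟪z, u⟫ ≤ ‖z‖ * ‖u‖ := real_inner_le_norm z u
  rw [le_div_iff₀ (by positivity)]
  rcases (norm_nonneg u).eq_or_lt with h0 | h0
  · rw [← h0]; simp [norm_nonneg z]
  · nlinarith
end pinv

lemma taylor_half {N M : ℕ} {X : Set (EuclideanSpace ℝ (Fin N))} (hX : Convex ℝ X)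
    {g : EuclideanSpace ℝ (Fin N) → EuclideanSpace ℝ (Fin M)}
    {G : EuclideanSpace ℝ (Fin N) → Matrix (Fin M) (Fin N) ℝ}
    (hderiv : ∀ y ∈ X, HasFDerivWithinAt g
      (LinearMap.toContinuousLinearMap (Matrix.toEuclideanLin (G y))) X y)
    {ω : ℝ} (hω : 0 ≤ ω)
    (hLip : ∀ y ∈ X, ∀ y' ∈ X, matOpNorm (G y - G y') ≤ ω * ‖y - y'‖)
    {x y : EuclideanSpace ℝ (Fin N)} (hx : x ∈ X) (hy : y ∈ X) :
    ‖g y - g x - matVec (G x) (y - x)‖ ≤ ω / 2 * ‖y - x‖ ^ 2 := by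
  set e : EuclideanSpace ℝ (Fin N) := y - x with he
  set w : EuclideanSpace ℝ (Fin M) := matVec (G x) e with hw
  set γ : ℝ → EuclideanSpace ℝ (Fin N) := fun t => x + t • e with hγ
  have hγX : ∀ t ∈ Set.Icc (0:ℝ) 1, γ t ∈ X := fun t ht => hX.add_smul_sub_mem hx hy ht
  have hγx : ∀ t : ℝ, γ t - x = t • e := by intro t; simp [hγ]
  have hγnorm : ∀ t ∈ Set.Icc (0:ℝ) 1, ‖γ t - x‖ = t * ‖e‖ := by
    intro t ht
    rw [hγx, norm_smul, Real.norm_eq_abs, abs_of_nonneg ht.1]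
  set f : ℝ → EuclideanSpace ℝ (Fin M) := fun t => g (γ t) - t • w - g x with hf
  set f' : ℝ → EuclideanSpace ℝ (Fin M) := fun t => matVec (G (γ t) - G x) e with hf'
  have hfderiv : ∀ t ∈ Set.Icc (0:ℝ) 1, HasDerivWithinAt f (f' t) (Set.Icc 0 1) t := by
    intro t ht
    have hγd : HasDerivWithinAt γ e (Set.Icc (0:ℝ) 1) t := by
      simpa [hγ] using (((hasDerivAt_id t).smul_const e).const_add x).hasDerivWithinAt
    have hcomp := (hderiv (γ t) (hγX t ht)).comp_hasDerivWithinAt t hγd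
      (fun s hs => hγX s hs)
    have hcomp' : HasDerivWithinAt (fun s => g (γ s)) (matVec (G (γ t)) e)
        (Set.Icc (0:ℝ) 1) t := hcomp
    have hlin : HasDerivWithinAt (fun s : ℝ => s • w) w (Set.Icc (0:ℝ) 1) t := by
      simpa using ((hasDerivAt_id t).smul_const w).hasDerivWithinAt
    have := (hcomp'.sub hlin).sub_const (g x)
    have heq : matVec (G (γ t)) e - w = f' t := by
      show _ = matVec (G (γ t) - G x) e
      rw [matVec_sub_mat, hw]
    rw [heq] at this
    exact this
  have hcont : ContinuousOn f (Set.Icc (0:ℝ) 1) :=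
    fun t ht => (hfderiv t ht).continuousWithinAt
  set c : ℝ := ω * ‖e‖ ^ 2 with hc
  have hbound : ∀ t ∈ Set.Ico (0:ℝ) 1, ‖f' t‖ ≤ c * t := by
    intro t ht
    have h1 : ‖f' t‖ ≤ matOpNorm (G (γ t) - G x) * ‖e‖ := norm_matVec_le _ _
    have h2 : matOpNorm (G (γ t) - G x) ≤ ω * ‖γ t - x‖ :=
      hLip (γ t) (hγX t ⟨ht.1, ht.2.le⟩) x hx
    rw [hγnorm t ⟨ht.1, ht.2.le⟩] at h2
    have h3 : matOpNorm (G (γ t) - G x) * ‖e‖ ≤ ω * (t * ‖e‖) * ‖e‖ := by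
      apply mul_le_mul_of_nonneg_right h2 (norm_nonneg e)
    calc ‖f' t‖ ≤ ω * (t * ‖e‖) * ‖e‖ := h1.trans h3
      _ = c * t := by rw [hc]; ring
  set B : ℝ → ℝ := fun t => c / 2 * t ^ 2 with hB
  have hBd : ∀ t : ℝ, HasDerivAt B (c * t) t := by
    intro t
    have := (hasDerivAt_pow 2 t).const_mul (c / 2)
    refine this.congr_deriv ?_
    push_cast
    ring
  have key : ∀ t ∈ Set.Icc (0:ℝ) 1, ‖f t‖ ≤ B t := by
    apply image_norm_le_of_norm_deriv_right_le_deriv_boundary hcont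
    · intro t ht
      exact (hfderiv t ⟨ht.1, ht.2.le⟩).mono_of_mem_nhdsWithin (Icc_mem_nhdsGE_of_mem ht)
    · simp [hf, hγ, hB]
    · exact hBd
    · exact hbound
  have h1 := key 1 ⟨zero_le_one, le_refl 1⟩
  have hγ1 : γ 1 = y := by simp [hγ, he]
  have hfeq : f 1 = g y - g x - matVec (G x) (y - x) := by
    rw [hf]
    simp only [one_smul, hγ1, hw, he]
    abel
  rw [hfeq] at h1
  calc ‖g y - g x - matVec (G x) (y - x)‖ ≤ B 1 := h1
    _ = ω / 2 * ‖y - x‖ ^ 2 := by rw [hB, hc, he]; ring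

set_option maxHeartbeats 1000000

lemma matVec_sub_vec {m n : ℕ} (A : Matrix (Fin m) (Fin n) ℝ) (u v : EuclideanSpace ℝ (Fin n)) :
    matVec A (u - v) = matVec A u - matVec A v := map_sub (Matrix.toEuclideanLin A) u v

lemma matVec_neg {m n : ℕ} (A : Matrix (Fin m) (Fin n) ℝ) (u : EuclideanSpace ℝ (Fin n)) :
    matVec A (-u) = -matVec A u := map_neg (Matrix.toEuclideanLin A) u

/-- Lemma 2 of the paper: perturbed error recursion
of the projected Gauss–Newton update with inexact descent d̃. -/
theorem perturbed_gauss_newton_recursion {N M : ℕ}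
    (X : Set (EuclideanSpace ℝ (Fin N))) (hX : Convex ℝ X)
    (g : EuclideanSpace ℝ (Fin N) → EuclideanSpace ℝ (Fin M))
    (G : EuclideanSpace ℝ (Fin N) → Matrix (Fin M) (Fin N) ℝ)
    (hderiv : ∀ y ∈ X, HasFDerivWithinAt g
      (LinearMap.toContinuousLinearMap (Matrix.toEuclideanLin (G y))) X y)
    (σmin σmax ω : ℝ) (hσ0 : 0 < σmin) (hσσ : σmin ≤ σmax) (hω : 0 < ω)
    (hlow : ∀ y ∈ X, ∀ v : EuclideanSpace ℝ (Fin N),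
      σmin * ‖v‖ ≤ ‖matVec (G y) v‖)
    (hup : ∀ y ∈ X, matOpNorm (G y) ≤ σmax)
    (hLip : ∀ y ∈ X, ∀ y' ∈ X, matOpNorm (G y - G y') ≤ ω * ‖y - y'‖)
    (xstar : EuclideanSpace ℝ (Fin N)) (hxstar : xstar ∈ X)
    (hfix : matVec (G xstar)ᵀ (g xstar) = 0)
    (εmin : ℝ) (hεmin : εmin = ‖g xstar‖)
    (α : ℝ) (hα0 : 0 < α) (hα1 : α ≤ 1)
    (d : EuclideanSpace ℝ (Fin N) → EuclideanSpace ℝ (Fin N))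
    (hd : ∀ x, d x = matVec (((G x)ᵀ * G x)⁻¹ * (G x)ᵀ) (g x))
    (P : EuclideanSpace ℝ (Fin N) → EuclideanSpace ℝ (Fin N))
    (hPne : ∀ u v, ‖P u - P v‖ ≤ ‖u - v‖)
    (hPfix : P xstar = xstar)
    (T₁ T₂ : ℝ)
    (hT₁ : T₁ = α * ω / (2 * σmin))
    (hT₂ : T₂ = (1 - α) * σmax / σmin + Real.sqrt 2 * α * ω * εmin / σmin ^ 2) :
    ∀ x ∈ X, ∀ dtil : EuclideanSpace ℝ (Fin N),
      ‖P (x - α • dtil) - xstar‖ ≤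
        T₁ * ‖x - xstar‖ ^ 2 + T₂ * ‖x - xstar‖ + α * ‖dtil - d x‖ := by
  intro x hx dtil
  have hε0 : 0 ≤ εmin := hεmin ▸ norm_nonneg _
  have h1α : (0:ℝ) ≤ 1 - α := by linarith
  have hlowx : ∀ v : EuclideanSpace ℝ (Fin N), σmin * ‖v‖ ≤ ‖matVec (G x) v‖ := hlow x hx
  have hgram := gram_inv_mul hσ0 hlowx
  -- step 0 : reduce to exact update
  have step0 : ‖P (x - α • dtil) - xstar‖ ≤ ‖x - α • d x - xstar‖ + α * ‖dtil - d x‖ := by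
    calc ‖P (x - α • dtil) - xstar‖ = ‖P (x - α • dtil) - P xstar‖ := by rw [hPfix]
      _ ≤ ‖x - α • dtil - xstar‖ := hPne _ _
      _ ≤ ‖x - α • d x - xstar‖ + α * ‖dtil - d x‖ := by
          have hsplit : x - α • dtil - xstar
              = (x - α • d x - xstar) - α • (dtil - d x) := by
            rw [smul_sub]; abel
          rw [hsplit]
          refine (norm_sub_le _ _).trans ?_
          rw [norm_smul, Real.norm_eq_abs, abs_of_pos hα0]
  -- key algebraic identity
  have hKA : (((G x)ᵀ * G x)⁻¹ * (G x)ᵀ) * G x = 1 := by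
    rw [Matrix.mul_assoc, hgram.1]
  have hKe : matVec (((G x)ᵀ * G x)⁻¹ * (G x)ᵀ) (matVec (G x) (x - xstar)) = x - xstar := by
    rw [← matVec_mulmat, hKA, matVec_one]
  have h1 : matVec ((G x)ᵀ - (G xstar)ᵀ) (g xstar) = matVec (G x)ᵀ (g xstar) := by
    rw [matVec_sub_mat, hfix, sub_zero]
  have h2 : matVec ((G x)ᵀ * G x)⁻¹ (matVec (G x)ᵀ (g xstar))
      = matVec (((G x)ᵀ * G x)⁻¹ * (G x)ᵀ) (g xstar) := by
    rw [← matVec_mulmat]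
  have h3 : matVec (G x) (x - xstar) - (g x - g xstar) - g xstar
      = matVec (G x) (x - xstar) - g x := by abel
  have hsplit : (x - xstar) - matVec (((G x)ᵀ * G x)⁻¹ * (G x)ᵀ) (g x)
      = matVec (((G x)ᵀ * G x)⁻¹ * (G x)ᵀ)
          (matVec (G x) (x - xstar) - (g x - g xstar))
        - matVec ((G x)ᵀ * G x)⁻¹ (matVec ((G x)ᵀ - (G xstar)ᵀ) (g xstar)) := by
    rw [h1, h2, ← matVec_sub_vec, h3, matVec_sub_vec, hKe]
  -- Taylor bound
  have ht := taylor_half hX hderiv hω.le hLip hx hxstar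
  have hAe : matVec (G x) (xstar - x) = -(matVec (G x) (x - xstar)) := by
    have hneg : xstar - x = -(x - xstar) := by abel
    rw [hneg, matVec_neg]
  rw [hAe] at ht
  have hveq : g xstar - g x - -(matVec (G x) (x - xstar))
      = matVec (G x) (x - xstar) - (g x - g xstar) := by abel
  rw [hveq, norm_sub_rev xstar x] at ht
  -- norm bounds for the two pieces
  have n1 : ‖matVec (((G x)ᵀ * G x)⁻¹ * (G x)ᵀ)
      (matVec (G x) (x - xstar) - (g x - g xstar))‖ ≤ ω / 2 * ‖x - xstar‖ ^ 2 / σmin := by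
    refine (pinv_norm_le hσ0 hlowx _).trans ?_
    gcongr
  have n2 : ‖matVec ((G x)ᵀ * G x)⁻¹ (matVec ((G x)ᵀ - (G xstar)ᵀ) (g xstar))‖
      ≤ ω * ‖x - xstar‖ * εmin / σmin ^ 2 := by
    refine (graminv_norm_le hσ0 hlowx _).trans ?_
    gcongr
    have htr : (G x)ᵀ - (G xstar)ᵀ = (G x - G xstar)ᵀ := by
      rw [Matrix.transpose_sub]
    rw [htr]
    refine (norm_matVec_transpose_le _ _).trans ?_
    rw [hεmin]
    exact mul_le_mul_of_nonneg_right (hLip x hx xstar hxstar) (norm_nonneg _)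
  -- exact-step bound
  have hxd : x - α • d x - xstar
      = (1 - α) • (x - xstar) + α • ((x - xstar) - matVec (((G x)ᵀ * G x)⁻¹ * (G x)ᵀ) (g x)) := by
    rw [hd x]
    module
  have main : ‖x - α • d x - xstar‖
      ≤ (1 - α) * ‖x - xstar‖ + α * (ω / 2 * ‖x - xstar‖ ^ 2 / σmin)
        + α * (ω * ‖x - xstar‖ * εmin / σmin ^ 2) := by
    rw [hxd]
    refine (norm_add_le _ _).trans ?_
    rw [norm_smul, norm_smul, Real.norm_eq_abs, Real.norm_eq_abs, abs_of_nonneg h1α,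
      abs_of_pos hα0, hsplit]
    have hsub : ‖matVec (((G x)ᵀ * G x)⁻¹ * (G x)ᵀ)
          (matVec (G x) (x - xstar) - (g x - g xstar))
        - matVec ((G x)ᵀ * G x)⁻¹ (matVec ((G x)ᵀ - (G xstar)ᵀ) (g xstar))‖
        ≤ ω / 2 * ‖x - xstar‖ ^ 2 / σmin + ω * ‖x - xstar‖ * εmin / σmin ^ 2 :=
      (norm_sub_le _ _).trans (add_le_add n1 n2)
    have := mul_le_mul_of_nonneg_left hsub hα0.le
    linarith
  -- final assembly
  have hsqrt2 : (1:ℝ) ≤ Real.sqrt 2 := by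
    nlinarith [Real.sq_sqrt (show (0:ℝ) ≤ 2 by norm_num), Real.sqrt_nonneg 2]
  have eqT₁ : T₁ * ‖x - xstar‖ ^ 2 = α * (ω / 2 * ‖x - xstar‖ ^ 2 / σmin) := by
    rw [hT₁]; field_simp
  have eqT₂ : T₂ * ‖x - xstar‖
      = (1 - α) * σmax / σmin * ‖x - xstar‖
        + Real.sqrt 2 * α * ω * εmin / σmin ^ 2 * ‖x - xstar‖ := by
    rw [hT₂]; ring
  have t1 : (1 - α) * ‖x - xstar‖ ≤ (1 - α) * σmax / σmin * ‖x - xstar‖ := by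
    have h : (1 - α) ≤ (1 - α) * σmax / σmin := by
      rw [le_div_iff₀ hσ0]; nlinarith
    exact mul_le_mul_of_nonneg_right h (norm_nonneg _)
  have hq : 0 ≤ α * ω * εmin * ‖x - xstar‖ := by positivity
  have t2 : α * (ω * ‖x - xstar‖ * εmin / σmin ^ 2)
      ≤ Real.sqrt 2 * α * ω * εmin / σmin ^ 2 * ‖x - xstar‖ := by
    have h : α * ω * εmin * ‖x - xstar‖ ≤ Real.sqrt 2 * (α * ω * εmin * ‖x - xstar‖) :=
      le_mul_of_one_le_left hq hsqrt2
    calc α * (ω * ‖x - xstar‖ * εmin / σmin ^ 2)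
        = α * ω * εmin * ‖x - xstar‖ / σmin ^ 2 := by ring
      _ ≤ Real.sqrt 2 * (α * ω * εmin * ‖x - xstar‖) / σmin ^ 2 := by gcongr
      _ = Real.sqrt 2 * α * ω * εmin / σmin ^ 2 * ‖x - xstar‖ := by ring
  linarith [step0, main]
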